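/- Let {S_t} be a nonincreasing sequence of nonnegative reals with S_t → 0, and suppose there exist C₁ > 0 and r ≥ 1 such that S_t ≤ C₁(S_{t-2} - S_t)^r + (S_{t-2} - S_t) for all sufficiently large t. Then there exist c > 0, η ∈ (0,1) and t₁ such that S_t ≤ c·η^t for all t ≥ t₁. -/
import Mathlib


theorem stmt15 (S : ℕ → ℝ) (hnn : ∀ t, 0 ≤ S t) (hmono : ∀ t, S (t+1) ≤ S t)
    (hlim : Filter.Tendsto S Filter.atTop (nhds 0))
    (C₁ r : ℝ) (hC : 0 < C₁) (hr : 1 ≤ r)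
    (hrec : ∃ T, ∀ t ≥ T, S (t+2) ≤ C₁ * (S t - S (t+2)) ^ r + (S t - S (t+2))) :
    ∃ c > (0 : ℝ), ∃ η ∈ Set.Ioo (0 : ℝ) 1, ∃ t₁, ∀ t ≥ t₁, S t ≤ c * η ^ t := by
  obtain ⟨T, hT⟩ := hrec
  have hanti : Antitone S := antitone_nat_of_succ_le hmono
  -- eventually S t ≤ 1
  have hev : ∀ᶠ t in Filter.atTop, S t < 1 := hlim.eventually_lt_const one_pos
  obtain ⟨T₁, hT₁⟩ := hev.exists_forall_of_atTop
  set T₀ := max T T₁ with hT₀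
  set ρ : ℝ := (C₁ + 1) / (C₁ + 2) with hρ
  have hρpos : 0 < ρ := by positivity
  have hρlt : ρ < 1 := by
    rw [hρ, div_lt_one (by linarith)]; linarith
  -- key contraction
  have key : ∀ t ≥ T₀, S (t+2) ≤ ρ * S t := by
    intro t ht
    have htT : T ≤ t := le_trans (le_max_left _ _) ht
    have htT₁ : T₁ ≤ t := le_trans (le_max_right _ _) ht
    have hD0 : 0 ≤ S t - S (t+2) := by
      have h1 := hmono t
      have h2 := hmono (t+1)
      linarith [h2.trans h1]
    have hD1 : S t - S (t+2) ≤ 1 := by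
      have := (hT₁ t htT₁).le
      have := hnn (t+2)
      linarith
    have hpow : (S t - S (t+2)) ^ r ≤ S t - S (t+2) := by
      rcases eq_or_lt_of_le hD0 with h | h
      · rw [← h, Real.zero_rpow (by linarith : r ≠ 0)]
      · calc (S t - S (t+2)) ^ r ≤ (S t - S (t+2)) ^ (1:ℝ) :=
              Real.rpow_le_rpow_of_exponent_ge h hD1 hr
          _ = S t - S (t+2) := Real.rpow_one _
    have h1 := hT t htT
    have h2 : S (t+2) ≤ (C₁ + 1) * (S t - S (t+2)) := by nlinarith
    rw [hρ, div_mul_eq_mul_div, le_div_iff₀ (by linarith : (0:ℝ) < C₁ + 2)]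
    nlinarith
  -- iterate
  have iter : ∀ k, S (T₀ + 2*k) ≤ ρ ^ k * S T₀ := by
    intro k
    induction k with
    | zero => simp
    | succ k ih =>
      have : T₀ + 2*(k+1) = (T₀ + 2*k) + 2 := by ring
      rw [this]
      calc S ((T₀ + 2*k) + 2) ≤ ρ * S (T₀ + 2*k) := key _ (by omega)
        _ ≤ ρ * (ρ ^ k * S T₀) := by
            exact mul_le_mul_of_nonneg_left ih hρpos.le
        _ = ρ ^ (k+1) * S T₀ := by ring
  set η : ℝ := Real.sqrt ρ with hη
  have hηpos : 0 < η := Real.sqrt_pos.mpr hρpos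
  have hηlt : η < 1 := by
    have h := Real.sqrt_lt_sqrt hρpos.le hρlt
    rwa [Real.sqrt_one] at h
  have hη2 : η ^ 2 = ρ := Real.sq_sqrt hρpos.le
  refine ⟨(S T₀ + 1) / η ^ (T₀ + 1), div_pos (by linarith [hnn T₀]) (pow_pos hηpos _), η, ⟨hηpos, hηlt⟩, T₀, ?_⟩
  intro t ht
  set k := (t - T₀) / 2 with hk
  have hmod := Nat.div_add_mod (t - T₀) 2
  have h2k : T₀ + 2*k ≤ t := by omega
  have h2k' : t - (T₀ + 1) ≤ 2*k := by omega
  have step1 : S t ≤ ρ ^ k * S T₀ := le_trans (hanti h2k) (iter k)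
  have step2 : ρ ^ k = η ^ (2*k) := by rw [pow_mul, hη2]
  have step3 : η ^ (2*k) ≤ η ^ (t - (T₀ + 1)) :=
    pow_le_pow_of_le_one hηpos.le hηlt.le h2k'
  have step4 : η ^ (t - (T₀ + 1)) ≤ η ^ t / η ^ (T₀ + 1) := by
    rw [le_div_iff₀ (pow_pos hηpos _)]
    rw [← pow_add]
    exact pow_le_pow_of_le_one hηpos.le hηlt.le (by omega)
  calc S t ≤ ρ ^ k * S T₀ := step1
    _ ≤ η ^ (t - (T₀ + 1)) * S T₀ := by
        rw [step2] at *; exact mul_le_mul_of_nonneg_right step3 (hnn T₀)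
    _ ≤ (η ^ t / η ^ (T₀ + 1)) * (S T₀ + 1) := by
        apply mul_le_mul step4 (by linarith) (hnn T₀) (by positivity)
    _ = (S T₀ + 1) / η ^ (T₀ + 1) * η ^ t := by ring
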